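/- With h_N defined by h_N(x) = (s/√N)·∏_{j=1}^{s-1}(1 - j/N) for x ∈ ((s-1)/√N, s/√N], one has pointwise convergence h_N(x) → x·exp(-x²/2) as N → ∞, for every x ∈ (0,∞). -/

import Mathlib

open Filter

/-- `h_N(x) = (s/√N) ∏_{j=1}^{s-1} (1 - j/N)` for `x ∈ ((s-1)/√N, s/√N]`,
i.e. with `s = ⌈√N x⌉`. -/
noncomputable def hN (N : ℕ) (x : ℝ) : ℝ :=
  ((⌈Real.sqrt N * x⌉₊ : ℝ) / Real.sqrt N) *
    ∏ j ∈ Finset.Icc 1 (⌈Real.sqrt N * x⌉₊ - 1), (1 - (j : ℝ) / N)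

lemma gauss_Icc (m : ℕ) : ∑ j ∈ Finset.Icc 1 m, (j:ℝ) = m*(m+1)/2 := by
  induction m with
  | zero => simp
  | succ n ih =>
    rw [Finset.sum_Icc_succ_top (by omega), ih]
    push_cast; ring

lemma log_lb (u : ℝ) (h0 : 0 ≤ u) (h2 : u ≤ 1/2) : -u - 2*u^2 ≤ Real.log (1-u) := by
  have hpos : 0 < 1 - u := by linarith
  have h1 : Real.log (1-u)⁻¹ ≤ (1-u)⁻¹ - 1 := Real.log_le_sub_one_of_pos (by positivity)
  rw [Real.log_inv] at h1
  have h3 : (1-u)⁻¹ ≤ 1 + u + 2*u^2 := by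
    rw [inv_le_iff_one_le_mul₀ hpos]
    nlinarith
  linarith

lemma sqrt_nat_atTop : Tendsto (fun N:ℕ => Real.sqrt N) atTop atTop := by
  apply tendsto_atTop_atTop.mpr
  intro b
  exact ⟨⌈b^2⌉₊, fun n hn => by
    calc b ≤ Real.sqrt (b^2) := by
            rcases le_or_gt b 0 with h|h
            · exact h.trans (Real.sqrt_nonneg _)
            · rw [Real.sqrt_sq h.le]
         _ ≤ Real.sqrt n := Real.sqrt_le_sqrt ((Nat.le_ceil _).trans (by exact_mod_cast hn))⟩

/-- For every `x > 0`, `h_N(x) → x e^{-x²/2}` as `N → ∞`. -/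
theorem hN_tendsto (x : ℝ) (hx : 0 < x) :
    Tendsto (fun N : ℕ => hN N x) atTop (nhds (x * Real.exp (-x ^ 2 / 2))) := by
  set s : ℕ → ℕ := fun N => ⌈Real.sqrt N * x⌉₊ with hs
  -- eventual basic facts
  have hev : ∀ᶠ N : ℕ in atTop, 1 ≤ N ∧ 2 * x ≤ Real.sqrt N := by
    filter_upwards [eventually_ge_atTop 1, sqrt_nat_atTop.eventually_ge_atTop (2*x)]
      with N h1 h2 using ⟨h1, h2⟩
  have hinv : Tendsto (fun N:ℕ => (Real.sqrt N)⁻¹) atTop (nhds 0) :=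
    tendsto_inv_atTop_zero.comp sqrt_nat_atTop
  -- basic facts under the eventual condition
  have key : ∀ N : ℕ, 1 ≤ N → 2 * x ≤ Real.sqrt N →
      0 < Real.sqrt N ∧ x ≤ (s N : ℝ) / Real.sqrt N ∧
      (s N : ℝ) / Real.sqrt N ≤ x + (Real.sqrt N)⁻¹ ∧ 1 ≤ s N ∧
      (∀ j ∈ Finset.Icc 1 (s N - 1), 0 ≤ (j:ℝ)/N ∧ (j:ℝ)/N ≤ x / Real.sqrt N ∧
        (j:ℝ)/N ≤ 1/2) := by
    intro N h1 h2
    have hNpos : (0:ℝ) < N := by exact_mod_cast h1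
    have hsq : 0 < Real.sqrt N := Real.sqrt_pos.mpr hNpos
    have hle : Real.sqrt N * x ≤ (s N : ℝ) := Nat.le_ceil _
    have hlt : (s N : ℝ) < Real.sqrt N * x + 1 :=
      Nat.ceil_lt_add_one (by positivity)
    have hxq : x / Real.sqrt N ≤ 1/2 := by
      rw [div_le_iff₀ hsq]; linarith
    refine ⟨hsq, ?_, ?_, ?_, ?_⟩
    · rw [le_div_iff₀ hsq]; linarith [hle]
    · rw [div_le_iff₀ hsq]
      have : (x + (Real.sqrt N)⁻¹) * Real.sqrt N = x * Real.sqrt N + 1 := by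
        field_simp
      rw [this]; nlinarith [hle, hlt]
    · have : (0:ℝ) < Real.sqrt N * x := by positivity
      exact Nat.one_le_ceil_iff.mpr this
    · intro j hj
      simp only [Finset.mem_Icc] at hj
      have hj1 : (j:ℝ) ≤ (s N : ℝ) - 1 := by
        have : j + 1 ≤ s N := by omega
        have := (Nat.cast_le (α := ℝ)).mpr this
        push_cast at this; linarith
      have hjx : (j:ℝ) ≤ Real.sqrt N * x := by linarith [hlt]
      have hN2 : Real.sqrt N * Real.sqrt N = N := Real.mul_self_sqrt hNpos.le
      constructor
      · positivity
      constructor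
      · rw [div_le_div_iff₀ hNpos hsq]
        calc (j:ℝ) * Real.sqrt N ≤ Real.sqrt N * x * Real.sqrt N := by
              nlinarith [hsq.le]
          _ = x * N := by rw [mul_comm (Real.sqrt N) x, mul_assoc, hN2]
      · calc (j:ℝ)/N ≤ Real.sqrt N * x / N := by gcongr
          _ ≤ 1/2 := by
              rw [div_le_iff₀ hNpos]
              nlinarith [mul_le_mul_of_nonneg_left h2 hsq.le, hN2]
  -- ratio tendsto
  have hub : Tendsto (fun N:ℕ => x + (Real.sqrt N)⁻¹) atTop (nhds x) := by
    have h : Tendsto (fun _:ℕ => x) atTop (nhds x) := tendsto_const_nhds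
    have h := h.add hinv
    rw [add_zero] at h
    exact h
  have hratio : Tendsto (fun N:ℕ => (s N : ℝ)/Real.sqrt N) atTop (nhds x) := by
    apply tendsto_of_tendsto_of_tendsto_of_le_of_le' tendsto_const_nhds hub
    · filter_upwards [hev] with N hN12
      exact (key N hN12.1 hN12.2).2.1
    · filter_upwards [hev] with N hN12
      exact (key N hN12.1 hN12.2).2.2.1
  -- the sum S
  set S : ℕ → ℝ := fun N => ∑ j ∈ Finset.Icc 1 (s N - 1), (j:ℝ)/N with hSdef
  have hStend : Tendsto S atTop (nhds (x^2/2)) := by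
    have heq : ∀ᶠ N : ℕ in atTop,
        (((s N:ℝ)/Real.sqrt N - (Real.sqrt N)⁻¹) * ((s N:ℝ)/Real.sqrt N))/2 = S N := by
      filter_upwards [hev] with N hN12
      obtain ⟨hsq, -, -, hs1, -⟩ := key N hN12.1 hN12.2
      have hNpos : (0:ℝ) < N := by exact_mod_cast hN12.1
      have hN2 : Real.sqrt N * Real.sqrt N = N := Real.mul_self_sqrt hNpos.le
      have hcast : ((s N - 1 : ℕ) : ℝ) = (s N : ℝ) - 1 := by
        push_cast [hs1]; ring
      have hsum : S N = ((s N : ℝ) - 1) * (s N : ℝ) / 2 / N := by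
        simp only [hSdef]
        rw [← Finset.sum_div, gauss_Icc, hcast]
        ring
      set q := Real.sqrt N with hq
      rw [hsum, ← hN2]
      ring
    have h1 : Tendsto (fun N:ℕ =>
        (((s N:ℝ)/Real.sqrt N - (Real.sqrt N)⁻¹) * ((s N:ℝ)/Real.sqrt N))/2)
        atTop (nhds ((x - 0) * x / 2)) := ((hratio.sub hinv).mul hratio).div_const 2
    have : (x - 0) * x / 2 = x^2/2 := by ring
    rw [this] at h1
    exact h1.congr' heq
  -- the log sum
  set g : ℕ → ℝ := fun N => ∑ j ∈ Finset.Icc 1 (s N - 1), Real.log (1 - (j:ℝ)/N) with hgdef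
  have hgt : Tendsto g atTop (nhds (-x^2/2)) := by
    have hupper : ∀ᶠ N : ℕ in atTop, g N ≤ -S N := by
      filter_upwards [hev] with N hN12
      obtain ⟨-, -, -, -, hjs⟩ := key N hN12.1 hN12.2
      have : g N ≤ ∑ j ∈ Finset.Icc 1 (s N - 1), -((j:ℝ)/N) := by
        apply Finset.sum_le_sum
        intro j hj
        obtain ⟨hu0, -, hu2⟩ := hjs j hj
        have := Real.log_le_sub_one_of_pos (x := 1 - (j:ℝ)/N) (by linarith)
        linarith
      simpa [hSdef, Finset.sum_neg_distrib] using this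
    have hlower : ∀ᶠ N : ℕ in atTop, -(1 + 2*(x/Real.sqrt N)) * S N ≤ g N := by
      filter_upwards [hev] with N hN12
      obtain ⟨-, -, -, -, hjs⟩ := key N hN12.1 hN12.2
      have : ∑ j ∈ Finset.Icc 1 (s N - 1), (-(1 + 2*(x/Real.sqrt N)) * ((j:ℝ)/N)) ≤ g N := by
        apply Finset.sum_le_sum
        intro j hj
        obtain ⟨hu0, hu1, hu2⟩ := hjs j hj
        have hlb := log_lb ((j:ℝ)/N) hu0 hu2
        nlinarith [hlb, mul_le_mul_of_nonneg_left hu1 hu0]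
      calc -(1 + 2*(x/Real.sqrt N)) * S N
          = ∑ j ∈ Finset.Icc 1 (s N - 1), (-(1 + 2*(x/Real.sqrt N)) * ((j:ℝ)/N)) := by
            rw [hSdef, Finset.mul_sum]
        _ ≤ g N := this
    have hLt : Tendsto (fun N:ℕ => -(1 + 2*(x/Real.sqrt N)) * S N) atTop
        (nhds (-x^2/2)) := by
      have hx0 : Tendsto (fun N:ℕ => x/Real.sqrt N) atTop (nhds 0) := by
        have := hinv.const_mul x
        simpa [div_eq_mul_inv, mul_zero] using this
      have hone : Tendsto (fun _:ℕ => (1:ℝ)) atTop (nhds 1) := tendsto_const_nhds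
      have h := ((hone.add (hx0.const_mul 2)).neg).mul hStend
      have heq2 : -((1:ℝ) + 2*0) * (x^2/2) = -x^2/2 := by ring
      rw [heq2] at h
      exact h
    have hUt : Tendsto (fun N:ℕ => -S N) atTop (nhds (-x^2/2)) := by
      have h := hStend.neg
      have : -(x^2/2) = -x^2/2 := by ring
      rw [this] at h
      exact h
    exact tendsto_of_tendsto_of_tendsto_of_le_of_le' hLt hUt hlower hupper
  -- conclude
  have hexp : Tendsto (fun N:ℕ => Real.exp (g N)) atTop (nhds (Real.exp (-x^2/2))) :=
    (Real.continuous_exp.tendsto _).comp hgt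
  have hfin := hratio.mul hexp
  apply hfin.congr'
  filter_upwards [hev] with N hN12
  obtain ⟨-, -, -, -, hjs⟩ := key N hN12.1 hN12.2
  simp only [hN]
  congr 1
  rw [hgdef, Real.exp_sum]
  refine Finset.prod_congr rfl fun j hj => ?_
  obtain ⟨-, -, hu2⟩ := hjs j hj
  rw [Real.exp_log (by linarith)]
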